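/- Impossibility of nontrivial object-conditional validity (finite-label toy version): let Y be a finite set with |Y| ≥ 2, let X be an uncountable standard Borel space, and let Γ be a set predictor that for every data-generating distribution R on X × Y satisfies P_R(y_{n+1} ∈ Γ | x_{n+1} = x) ≥ 1 − ε for R_X-almost every x with ε < 1/|Y|. Then for every atomless R_X and R_X-almost every test object x that, almost surely, does not appear among x_1,...,x_n, the predictor must output Γ = Y (the trivial full prediction set) with positive probability. -/

import Mathlib

open MeasureTheory ProbabilityTheory Set Function
open scoped ENNReal NNReal

lemma aux_pi_restrict {ι : Type*} [Fintype ι] {α : ι → Type*} [∀ i, MeasurableSpace (α i)]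
    (μ : ∀ i, Measure (α i)) [∀ i, IsFiniteMeasure (μ i)] (W : ∀ i, Set (α i))
    (hW : ∀ i, MeasurableSet (W i)) :
    (Measure.pi μ).restrict (Set.pi Set.univ W) = Measure.pi (fun i => (μ i).restrict (W i)) := by
  refine (Measure.pi_eq fun s hs => ?_).symm
  rw [Measure.restrict_apply (MeasurableSet.univ_pi hs), ← pi_inter_distrib, Measure.pi_pi]
  exact Finset.prod_congr rfl fun i _ => (Measure.restrict_apply (hs i)).symm

lemma aux_compare {X Y : Type*} [MeasurableSpace X] [MeasurableSpace Y]
    (RX : Measure X) [IsProbabilityMeasure RX] (Q Q' : Kernel X Y)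
    [IsMarkovKernel Q] [IsMarkovKernel Q'] {S : Set X} (hS : MeasurableSet S)
    (hagree : ∀ x, x ∉ S → Q x = Q' x) (n : ℕ) (A : Set (Fin n → X × Y)) :
    Measure.pi (fun _ : Fin n => RX.compProd Q) A ≤
      Measure.pi (fun _ : Fin n => RX.compProd Q') A + n * RX S := by
  classical
  set W : Set (X × Y) := Prod.fst ⁻¹' Sᶜ with hWdef
  have hW : MeasurableSet W := measurable_fst hS.compl
  set G : Set (Fin n → X × Y) := Set.pi Set.univ (fun _ => W) with hGdef
  have hG : MeasurableSet G := MeasurableSet.univ_pi fun _ => hW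
  set P := Measure.pi (fun _ : Fin n => RX.compProd Q) with hPdef
  set P' := Measure.pi (fun _ : Fin n => RX.compProd Q') with hP'def
  have hres : (RX.compProd Q).restrict W = (RX.compProd Q').restrict W := by
    ext B hB
    rw [Measure.restrict_apply hB, Measure.restrict_apply hB,
      Measure.compProd_apply (hB.inter hW), Measure.compProd_apply (hB.inter hW)]
    refine lintegral_congr fun x => ?_
    by_cases hxS : x ∈ S
    · have h0 : Prod.mk x ⁻¹' (B ∩ W) = ∅ := by
        ext y; simp [hWdef, hxS]
      simp [h0]
    · rw [hagree x hxS]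
  have h1 : P (A ∩ G) ≤ P' A := by
    have e1 : P (A ∩ G) = P.restrict G A := (Measure.restrict_apply' hG).symm
    have e2 : P.restrict G = P'.restrict G := by
      rw [hPdef, hP'def, aux_pi_restrict _ _ (fun _ => hW), aux_pi_restrict _ _ (fun _ => hW),
        hres]
    rw [e1, e2, Measure.restrict_apply' hG]
    exact measure_mono inter_subset_left
  have h2 : P Gᶜ ≤ n * RX S := by
    have hsub : Gᶜ ⊆ ⋃ i : Fin n, eval i ⁻¹' Wᶜ := by
      intro t ht
      simp only [hGdef, mem_compl_iff, mem_pi, mem_univ, forall_true_left, not_forall] at ht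
      obtain ⟨i, hi⟩ := ht
      exact mem_iUnion.2 ⟨i, hi⟩
    have hWc : (RX.compProd Q) Wᶜ = RX S := by
      have : Wᶜ = Prod.fst ⁻¹' S := by rw [hWdef, ← preimage_compl, compl_compl]
      rw [this, ← Measure.fst_apply hS, Measure.fst_compProd]
    have heach : ∀ i : Fin n, P (eval i ⁻¹' Wᶜ) = RX S := by
      intro i
      rw [hPdef, eval_preimage, Measure.pi_pi,
        Finset.prod_eq_single_of_mem i (Finset.mem_univ i)
          (fun j _ hj => by simp [Function.update_of_ne hj])]
      simp [hWc]
    calc P Gᶜ ≤ ∑' i : Fin n, P (eval i ⁻¹' Wᶜ) :=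
          (measure_mono hsub).trans (measure_iUnion_le _)
      _ = n * RX S := by
          rw [tsum_fintype]
          simp only [heach]
          simp [Finset.sum_const, nsmul_eq_mul]
  calc P A = P (A ∩ G) + P (A \ G) := (measure_inter_add_diff A hG).symm
    _ ≤ P' A + P Gᶜ := add_le_add h1 (measure_mono (diff_subset_compl A G))
    _ ≤ P' A + n * RX S := add_le_add_right h2 _

/-- Impossibility of nontrivial object-conditional validity (finite-label toy version):
`Y` is finite with at least 2 labels, `X` is an uncountable standard Borel space, and the
set predictor `Γ` is object-conditionally valid at level `ε < 1 / |Y|` under every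
data-generating distribution with `X`-marginal `RX` and arbitrary label kernel `Q`
(training data i.i.d. from `RX ⊗ₘ Q`, conditional coverage at the test object `x`).
Then for every atomless `RX` and every kernel `Q`, for `RX`-almost every test object `x`
(which then almost surely does not appear among the training objects) the predictor
outputs the trivial full prediction set `Γ = Y` with positive probability. -/
theorem stmt18 {X Y : Type*} [MeasurableSpace X] [StandardBorelSpace X] [Uncountable X]
    [Fintype Y] [MeasurableSpace Y] [MeasurableSingletonClass Y]
    (hY : 2 ≤ Fintype.card Y)
    (n : ℕ) (ε : ℝ) (hε : 0 < ε) (hεY : ε < 1 / Fintype.card Y)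
    (Γ : (Fin n → X × Y) → X → Set Y)
    (RX : Measure X) [IsProbabilityMeasure RX] (hRX : ∀ a : X, RX {a} = 0)
    (hvalid : ∀ Q : Kernel X Y, IsMarkovKernel Q →
      ∀ᵐ x ∂ RX,
        1 - ENNReal.ofReal ε ≤
          ∫⁻ t, Q x (Γ t x) ∂(Measure.pi fun _ : Fin n => RX.compProd Q)) :
    ∀ Q : Kernel X Y, IsMarkovKernel Q →
      ∀ᵐ x ∂ RX,
        (Measure.pi fun _ : Fin n => RX.compProd Q) {t | ∃ i, (t i).1 = x} = 0
        ∧ 0 < (Measure.pi fun _ : Fin n => RX.compProd Q) {t | Γ t x = Set.univ} := by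
  intro Q hQ
  haveI := hQ
  obtain ⟨f, hf⟩ := exists_measurableEmbedding_real X
  classical
  have hcard0 : (0:ℝ) < Fintype.card Y := by
    have : 0 < Fintype.card Y := by omega
    exact_mod_cast this
  have hε1 : ENNReal.ofReal ε ≤ 1 := by
    refine ENNReal.ofReal_le_one.2 (le_of_lt (lt_of_lt_of_le hεY ?_))
    rw [div_le_one hcard0]
    exact_mod_cast Nat.one_le_of_lt hY
  set ν : Measure ℝ := RX.map f with hνdef
  have hν0 : ∀ r : ℝ, ν {r} = 0 := by
    intro r
    rw [hνdef, Measure.map_apply hf.measurable (measurableSet_singleton r)]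
    have hsub : (f ⁻¹' {r}).Subsingleton := fun a ha b hb => hf.injective (by
      simp only [Set.mem_preimage, Set.mem_singleton_iff] at ha hb; rw [ha, hb])
    rcases hsub.eq_empty_or_singleton with h | ⟨a, h⟩
    · simp [h]
    · rw [h]; exact hRX a
  have hinterval : ∀ (r : ℝ) (δ : ℝ≥0∞), 0 < δ →
      ∃ a b : ℚ, (a : ℝ) < r ∧ r < (b:ℝ) ∧ ν (Set.Ioo (a:ℝ) (b:ℝ)) < δ := by
    intro r δ hδ
    have hpos : ∀ k : ℕ, (0:ℝ) < 1/(k+1) := fun k => by positivity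
    have hanti : Antitone (fun k : ℕ => Set.Ioo (r - 1/(k+1)) (r + 1/(k+1))) := by
      intro k l hkl
      have h1 : (1:ℝ)/(l+1) ≤ 1/(k+1) := by
        apply one_div_le_one_div_of_le (by positivity)
        have : (k:ℝ) ≤ l := by exact_mod_cast hkl
        linarith
      exact Set.Ioo_subset_Ioo (by linarith) (by linarith)
    have hiInter : ⋂ k : ℕ, Set.Ioo (r - 1/(k+1)) (r + 1/(k+1)) = {r} := by
      ext z
      simp only [Set.mem_iInter, Set.mem_Ioo, Set.mem_singleton_iff]
      constructor
      · intro h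
        by_contra hne
        obtain ⟨k, hk⟩ := exists_nat_one_div_lt (abs_pos.2 (sub_ne_zero.2 hne))
        have h2 := h k
        have : |z - r| < 1/(k+1) := abs_lt.2 ⟨by linarith [h2.1], by linarith [h2.2]⟩
        linarith
      · rintro rfl k
        exact ⟨by linarith [hpos k], by linarith [hpos k]⟩
    have hten := tendsto_measure_iInter_atTop (μ := ν)
      (fun k => measurableSet_Ioo.nullMeasurableSet) hanti ⟨0, measure_ne_top _ _⟩
    rw [hiInter, hν0 r] at hten
    obtain ⟨k, hk⟩ := (hten.eventually_lt_const hδ).exists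
    obtain ⟨a, ha1, ha2⟩ := exists_rat_btwn (show r - 1/(k+1) < r by linarith [hpos k])
    obtain ⟨b, hb1, hb2⟩ := exists_rat_btwn (show r < r + 1/(k+1) by linarith [hpos k])
    refine ⟨a, b, ha2, hb1, lt_of_le_of_lt (measure_mono (Set.Ioo_subset_Ioo ha1.le hb2.le)) hk⟩
  set S : ℚ × ℚ × Y → Set X := fun p => f ⁻¹' Set.Ioo (p.1:ℝ) (p.2.1:ℝ) with hSdef
  have hSm : ∀ p, MeasurableSet (S p) := fun p => hf.measurable measurableSet_Ioo
  set K : ℚ × ℚ × Y → Kernel X Y := fun p =>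
    Kernel.piecewise (hSm p) (Kernel.const X (Measure.dirac p.2.2)) Q with hKdef
  have hKM : ∀ p, IsMarkovKernel (K p) := fun p => by
    rw [hKdef]
    infer_instance
  have hae : ∀ᵐ x ∂ RX, ∀ p : ℚ × ℚ × Y,
      1 - ENNReal.ofReal ε ≤
        ∫⁻ t, (K p) x (Γ t x) ∂(Measure.pi fun _ : Fin n => RX.compProd (K p)) :=
    ae_all_iff.mpr fun p => hvalid (K p) (hKM p)
  filter_upwards [hae] with x hx
  constructor
  · have h0 : (RX.compProd Q) (Prod.fst ⁻¹' {x}) = 0 := by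
      rw [← Measure.fst_apply (measurableSet_singleton x), Measure.fst_compProd]
      exact hRX x
    have hsub : {t : Fin n → X × Y | ∃ i, (t i).1 = x} ⊆
        ⋃ i : Fin n, Function.eval i ⁻¹' (Prod.fst ⁻¹' {x}) := by
      rintro t ⟨i, hi⟩
      exact Set.mem_iUnion.2 ⟨i, hi⟩
    exact measure_mono_null hsub
      (measure_iUnion_null fun i => Measure.pi_eval_preimage_null _ h0)
  · set P := Measure.pi fun _ : Fin n => RX.compProd Q with hPdef
    have key : ∀ y : Y, P {t | y ∉ Γ t x} ≤ ENNReal.ofReal ε := by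
      intro y
      refine ENNReal.le_of_forall_pos_le_add fun η hη _ => ?_
      have hδpos : (0:ℝ≥0∞) < (η : ℝ≥0∞) / (n+1) :=
        ENNReal.div_pos (by exact_mod_cast hη.ne') (by simp)
      obtain ⟨a, b, hax, hxb, hab⟩ := hinterval (f x) _ hδpos
      set p : ℚ × ℚ × Y := (a, b, y) with hpdef
      have hxS : x ∈ S p := by
        simp only [hSdef, Set.mem_preimage, Set.mem_Ioo]
        exact ⟨hax, hxb⟩
      have hRS : RX (S p) < (η:ℝ≥0∞)/(n+1) := by
        have : RX (S p) = ν (Set.Ioo (a:ℝ) (b:ℝ)) :=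
          (Measure.map_apply hf.measurable measurableSet_Ioo).symm
        rw [this]
        exact hab
      haveI := hKM p
      set P' := Measure.pi fun _ : Fin n => RX.compProd (K p) with hP'def
      have hKx : (K p) x = Measure.dirac y := by
        rw [hKdef]
        simp only [Kernel.piecewise_apply, if_pos hxS, Kernel.const_apply]
        rfl
      have hint : 1 - ENNReal.ofReal ε ≤ ∫⁻ t, Measure.dirac y (Γ t x) ∂P' := by
        have h := hx p
        rwa [hKx] at h
      obtain ⟨φ, hφm, hφle, hφeq⟩ :=
        exists_measurable_le_lintegral_eq P' (fun t => Measure.dirac y (Γ t x))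
      set V : Set (Fin n → X × Y) := {t | 0 < φ t} with hVdef
      have hVm : MeasurableSet V := measurableSet_lt measurable_const hφm
      have hVsub : V ⊆ {t | y ∈ Γ t x} := by
        intro t ht
        by_contra hy
        have hz : Measure.dirac y (Γ t x) = 0 := by
          rw [Measure.dirac_apply' _ ((Γ t x).toFinite.measurableSet)]
          exact Set.indicator_of_notMem hy 1
        have : (0:ℝ≥0∞) < 0 := lt_of_lt_of_le ht ((hφle t).trans_eq hz)
        exact absurd this (lt_irrefl 0)
      have hφle1 : ∀ t, φ t ≤ V.indicator 1 t := by
        intro t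
        by_cases h0 : 0 < φ t
        · have h1 : φ t ≤ 1 := by
            exact (hφle t).trans prob_le_one
          have : t ∈ V := h0
          simpa [Set.indicator_of_mem this] using h1
        · have : φ t = 0 := by
            exact le_antisymm (not_lt.1 h0) zero_le
          simp [this]
      have hPV : 1 - ENNReal.ofReal ε ≤ P' V := by
        calc 1 - ENNReal.ofReal ε ≤ ∫⁻ t, φ t ∂P' := hφeq ▸ hint
          _ ≤ ∫⁻ t, V.indicator 1 t ∂P' := lintegral_mono hφle1
          _ = P' V := lintegral_indicator_one hVm
      have hP'A : P' {t | y ∉ Γ t x} ≤ ENNReal.ofReal ε := by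
        have hsub : {t | y ∉ Γ t x} ⊆ Vᶜ := fun t ht hV' => ht (hVsub hV')
        calc P' {t | y ∉ Γ t x} ≤ P' Vᶜ := measure_mono hsub
          _ = 1 - P' V := by
              rw [measure_compl hVm (measure_ne_top _ _), measure_univ]
          _ ≤ ENNReal.ofReal ε := by
              rw [tsub_le_iff_right]
              calc (1:ℝ≥0∞) = (1 - ENNReal.ofReal ε) + ENNReal.ofReal ε :=
                    (tsub_add_cancel_of_le hε1).symm
                _ ≤ P' V + ENNReal.ofReal ε := add_le_add_left hPV _
                _ = ENNReal.ofReal ε + P' V := add_comm _ _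
      have hagree : ∀ x', x' ∉ S p → Q x' = (K p) x' := by
        intro x' hx'
        rw [hKdef]
        simp [Kernel.piecewise_apply, hx']
      have hcomp := aux_compare RX Q (K p) (hSm p) hagree n {t | y ∉ Γ t x}
      calc P {t | y ∉ Γ t x} ≤ P' {t | y ∉ Γ t x} + n * RX (S p) := hcomp
        _ ≤ ENNReal.ofReal ε + n * ((η:ℝ≥0∞)/(n+1)) :=
            add_le_add hP'A (mul_le_mul_right hRS.le _)
        _ ≤ ENNReal.ofReal ε + η := by
            gcongr
            calc (n:ℝ≥0∞) * ((η:ℝ≥0∞)/(n+1)) ≤ ((n:ℝ≥0∞)+1) * ((η:ℝ≥0∞)/(n+1)) := by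
                  gcongr
                  exact le_add_of_nonneg_right zero_le
              _ = η := by
                  rw [show ((n:ℝ≥0∞)+1) = ((n+1 : ℕ) : ℝ≥0∞) by push_cast; ring]
                  exact ENNReal.mul_div_cancel' (by simp) (by simp)
    have hunion : {t | Γ t x ≠ Set.univ} ⊆ ⋃ y : Y, {t | y ∉ Γ t x} := by
      intro t ht
      obtain ⟨y, hy⟩ := (Set.ne_univ_iff_exists_notMem _).1 ht
      exact Set.mem_iUnion.2 ⟨y, hy⟩
    have hB : P {t | Γ t x ≠ Set.univ} ≤ (Fintype.card Y : ℝ≥0∞) * ENNReal.ofReal ε := by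
      calc P {t | Γ t x ≠ Set.univ} ≤ ∑' y : Y, P {t | y ∉ Γ t x} :=
            (measure_mono hunion).trans (measure_iUnion_le _)
        _ ≤ ∑' _ : Y, ENNReal.ofReal ε := ENNReal.tsum_le_tsum key
        _ = (Fintype.card Y : ℝ≥0∞) * ENNReal.ofReal ε := by
            rw [tsum_fintype]
            simp [Finset.sum_const, nsmul_eq_mul, Finset.card_univ]
    have hlt1 : (Fintype.card Y : ℝ≥0∞) * ENNReal.ofReal ε < 1 := by
      have hmul : (Fintype.card Y : ℝ) * ε < 1 := by
        have h := (lt_div_iff₀ hcard0).1 hεY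
        linarith
      calc (Fintype.card Y : ℝ≥0∞) * ENNReal.ofReal ε
          = ENNReal.ofReal ((Fintype.card Y : ℝ) * ε) := by
            rw [ENNReal.ofReal_mul (by positivity), ENNReal.ofReal_natCast]
        _ < 1 := by
            rw [← ENNReal.ofReal_one]
            exact (ENNReal.ofReal_lt_ofReal_iff (by norm_num)).2 hmul
    rw [pos_iff_ne_zero]
    intro h0
    have hge : (1:ℝ≥0∞) ≤ P {t | Γ t x ≠ Set.univ} := by
      have hu : (Set.univ : Set (Fin n → X × Y)) ⊆
          {t | Γ t x ≠ Set.univ} ∪ {t | Γ t x = Set.univ} := by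
        intro t _
        by_cases h : Γ t x = Set.univ
        · exact Or.inr h
        · exact Or.inl h
      calc (1:ℝ≥0∞) = P Set.univ := measure_univ.symm
        _ ≤ P ({t | Γ t x ≠ Set.univ} ∪ {t | Γ t x = Set.univ}) := measure_mono hu
        _ ≤ P {t | Γ t x ≠ Set.univ} + P {t | Γ t x = Set.univ} := measure_union_le _ _
        _ = P {t | Γ t x ≠ Set.univ} := by rw [h0, add_zero]
    exact absurd hlt1 (not_lt.2 (hge.trans hB))
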